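/- (Greedy Move) Let G=(V,E_L,E_R) be an achievement positional game in which no edge of E_L∪E_R has size 1, and suppose there is a blue edge {u,v}∈E_L such that for every edge e∈E_L∪E_R, u∈e implies v∈e. Then starting by picking v is an optimal first move for Left: if Left has a winning (resp. non-losing) strategy on G as first player, then Left has a winning (resp. non-losing) strategy on G as first player whose first move is to pick v. (In particular o(G) ≤_L o(G_v^u), where G_v^u is the updated game after Left picks v and Right makes the forced answer u.) -/

import Mathlib

namespace APG

/-- The two players: Left and Right. -/
inductive Player : Type
  | L : Player
  | R : Player
deriving DecidableEq, Repr

/-- The opponent of a player. -/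
def Player.other : Player → Player
  | .L => .R
  | .R => .L

/-- An achievement positional game: a finite vertex set together with the set of
blue edges (Left's winning sets) and the set of red edges (Right's winning sets). -/
structure Game : Type where
  V : Finset ℕ
  EL : Finset (Finset ℕ)
  ER : Finset (Finset ℕ)

/-- The edges are nonempty subsets of the vertex set. -/
def WellFormed (G : Game) : Prop :=
  (∀ e ∈ G.EL, e ⊆ G.V ∧ e.Nonempty) ∧ (∀ e ∈ G.ER, e ⊆ G.V ∧ e.Nonempty)

/-- The winning sets of a given player. -/
def Game.edges (G : Game) : Player → Finset (Finset ℕ)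
  | .L => G.EL
  | .R => G.ER

/-- The player who makes the `i`-th move (0-indexed) when `s` moves first. -/
def mover (s : Player) (i : ℕ) : Player := if i % 2 = 0 then s else s.other

/-- The set of vertices picked by player `p` along the history `h`
(the chronological list of the moves played so far), when `s` moved first. -/
def picked (s p : Player) (h : List ℕ) : Finset ℕ :=
  ((Finset.range h.length).filter fun i => mover s i = p).image fun i => h.getD i 0

/-- The set `S` of picked vertices fills some edge of `E`. -/
def fills (E : Finset (Finset ℕ)) (S : Finset ℕ) : Prop := ∃ e ∈ E, e ⊆ S

/-- The game is over: some player has picked all the vertices of one of their edges. -/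
def ended (G : Game) (s : Player) (h : List ℕ) : Prop :=
  fills G.EL (picked s .L h) ∨ fills G.ER (picked s .R h)

/-- `h` is a legal history: no vertex is picked twice, every picked vertex belongs to
the board, and no move is made after the game has ended. -/
def ValidHist (G : Game) (s : Player) (h : List ℕ) : Prop :=
  h.Nodup ∧ (∀ x ∈ h, x ∈ G.V) ∧ ∀ k, k < h.length → ¬ ended G s (h.take k)

/-- A strategy: a map assigning to each position (history) a vertex to pick. -/
abbrev Strategy := List ℕ → ℕ

/-- Along `h`, every move of player `p` agrees with the strategy `σ`. -/
def Follows (s p : Player) (σ : Strategy) (h : List ℕ) : Prop :=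
  ∀ k, k < h.length → mover s k = p → h.getD k 0 = σ (h.take k)

/-- A finished play: either the game has ended or all vertices have been picked. -/
def Complete (G : Game) (s : Player) (h : List ℕ) : Prop :=
  ended G s h ∨ h.length = G.V.card

/-- The strategy `σ` of player `p` always suggests a legal move (an unpicked vertex)
whenever the game is not over and it is `p`'s turn. -/
def Legal (G : Game) (s p : Player) (σ : Strategy) : Prop :=
  ∀ h, ValidHist G s h → Follows s p σ h → ¬ ended G s h → h.length < G.V.card →
    mover s h.length = p → σ h ∈ G.V ∧ σ h ∉ h

/-- Player `p` has a winning strategy on `G` when `s` moves first: following it,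
every finished play ends with `p` having filled one of their edges (and, the game
having ended right there, the opponent has not filled an edge first). -/
def WinsAs (G : Game) (s p : Player) : Prop :=
  ∃ σ : Strategy, Legal G s p σ ∧
    ∀ h, ValidHist G s h → Follows s p σ h → Complete G s h →
      fills (G.edges p) (picked s p h)

/-- Player `p` has a non-losing strategy on `G` when `s` moves first: following it,
the opponent never fills one of their edges. -/
def NonLosingAs (G : Game) (s p : Player) : Prop :=
  ∃ σ : Strategy, Legal G s p σ ∧
    ∀ h, ValidHist G s h → Follows s p σ h → Complete G s h →
      ¬ fills (G.edges p.other) (picked s p.other h)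

/-- The possible results of the game, for a fixed starting player. -/
inductive Result : Type
  | Lwin : Result
  | draw : Result
  | Rwin : Result
deriving DecidableEq, Repr

/-- The result of `G` with optimal play, when `s` moves first, is `r`:
a win for a player means that player has a winning strategy, a draw means
both players have non-losing strategies. -/
def resultIs (G : Game) (s : Player) : Result → Prop
  | .Lwin => WinsAs G s .L
  | .Rwin => WinsAs G s .R
  | .draw => NonLosingAs G s .L ∧ NonLosingAs G s .R

/-- An outcome: the pair of results with optimal play
(when Left starts, when Right starts). -/
abbrev Outcome := Result × Result

/-- `G` has outcome `o`. -/
def hasOutcome (G : Game) (o : Outcome) : Prop :=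
  resultIs G .L o.1 ∧ resultIs G .R o.2

/-- Numerical value of a result, from Left's point of view:
Right wins < draw < Left wins. -/
def Result.val : Result → ℕ
  | .Rwin => 0
  | .draw => 1
  | .Lwin => 2

/-- The partial order `≤_L` on outcomes, comparing both components simultaneously
from Left's point of view. -/
def outLE (o o' : Outcome) : Prop := o.1.val ≤ o'.1.val ∧ o.2.val ≤ o'.2.val

def oL : Outcome := (.Lwin, .Lwin)
def oLminus : Outcome := (.Lwin, .draw)
def oN : Outcome := (.Lwin, .Rwin)
def oD : Outcome := (.draw, .draw)
def oRminus : Outcome := (.draw, .Rwin)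
def oR : Outcome := (.Rwin, .Rwin)

/-- The updated game `G_u` after Left has picked `u`. -/
def subL (G : Game) (u : ℕ) : Game where
  V := G.V.erase u
  EL := G.EL.image fun e => e.erase u
  ER := G.ER.filter fun e => u ∉ e

/-- The updated game `G^u` after Right has picked `u`. -/
def subR (G : Game) (u : ℕ) : Game where
  V := G.V.erase u
  EL := G.EL.filter fun e => u ∉ e
  ER := G.ER.image fun e => e.erase u

/-- The updated game `G_u^v` after Left has picked `u` and Right has picked `v`. -/
def updLR (G : Game) (u v : ℕ) : Game where
  V := (G.V.erase u).erase v
  EL := (G.EL.filter fun e => v ∉ e).image fun e => e.erase u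
  ER := (G.ER.filter fun e => u ∉ e).image fun e => e.erase v

/-- The disjoint union of two games. -/
def gunion (G G' : Game) : Game where
  V := G.V ∪ G'.V
  EL := G.EL ∪ G'.EL
  ER := G.ER ∪ G'.ER

-- AUX START
open Finset

instance (E : Finset (Finset ℕ)) (S : Finset ℕ) : Decidable (fills E S) := by
  unfold fills; infer_instance

lemma fills_mono {E : Finset (Finset ℕ)} {S T : Finset ℕ} (h : fills E S) (hst : S ⊆ T) :
    fills E T := by
  obtain ⟨e, he, hsub⟩ := h
  exact ⟨e, he, hsub.trans hst⟩

/-- free vertices at a position -/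
def free (H : Game) (A B : Finset ℕ) : Finset ℕ := H.V \ (A ∪ B)

def valAux (H : Game) : ℕ → Player → Finset ℕ → Finset ℕ → ℕ
  | 0, _, A, B => if fills H.EL A then 2 else if fills H.ER B then 0 else 1
  | n+1, p, A, B =>
    if fills H.EL A then 2 else if fills H.ER B then 0 else
    if hf : (free H A B).Nonempty then
      match p with
      | .L => (free H A B).sup' hf fun x => valAux H n .R (insert x A) B
      | .R => (free H A B).inf' hf fun x => valAux H n .L A (insert x B)
    else 1

def val (H : Game) (p : Player) (A B : Finset ℕ) : ℕ := valAux H (free H A B).card p A B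

lemma val_of_fillsL {H : Game} {A B : Finset ℕ} (p : Player) (h : fills H.EL A) :
    val H p A B = 2 := by
  unfold val; cases (free H A B).card <;> simp [valAux, h]

lemma val_of_fillsR {H : Game} {A B : Finset ℕ} (p : Player) (h1 : ¬ fills H.EL A)
    (h2 : fills H.ER B) : val H p A B = 0 := by
  unfold val; cases (free H A B).card <;> simp [valAux, h1, h2]

lemma val_of_empty {H : Game} {A B : Finset ℕ} (p : Player) (h1 : ¬ fills H.EL A)
    (h2 : ¬ fills H.ER B) (hf : free H A B = ∅) : val H p A B = 1 := by
  unfold val; rw [hf]; simp [valAux, h1, h2]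

lemma valAux_le_two (H : Game) (n : ℕ) (p : Player) (A B : Finset ℕ) :
    valAux H n p A B ≤ 2 := by
  induction n generalizing p A B with
  | zero => unfold valAux; split <;> [skip; split] <;> omega
  | succ n ih =>
    unfold valAux
    split
    · omega
    split
    · omega
    split
    · rename_i hf
      cases p
      · exact Finset.sup'_le _ _ fun x _ => ih _ _ _
      · obtain ⟨x, hx⟩ := hf
        exact le_trans (Finset.inf'_le _ hx) (ih _ _ _)
    · omega

lemma val_le_two (H : Game) (p : Player) (A B : Finset ℕ) : val H p A B ≤ 2 :=
  valAux_le_two _ _ _ _ _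

lemma free_insert_left (H : Game) (A B : Finset ℕ) (x : ℕ) :
    free H (insert x A) B = (free H A B).erase x := by
  unfold free
  rw [Finset.insert_union, Finset.sdiff_insert]

lemma free_insert_right (H : Game) (A B : Finset ℕ) (x : ℕ) :
    free H A (insert x B) = (free H A B).erase x := by
  unfold free
  rw [Finset.union_insert, Finset.sdiff_insert]

lemma valAux_succ (H : Game) (n : ℕ) (p : Player) (A B : Finset ℕ) :
    valAux H (n+1) p A B =
    (if fills H.EL A then 2 else if fills H.ER B then 0 else
    if hf : (free H A B).Nonempty then
      match p with
      | .L => (free H A B).sup' hf fun x => valAux H n .R (insert x A) B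
      | .R => (free H A B).inf' hf fun x => valAux H n .L A (insert x B)
    else 1) := rfl

lemma val_unfold_L {H : Game} {A B : Finset ℕ} (h1 : ¬ fills H.EL A) (h2 : ¬ fills H.ER B)
    (hf : (free H A B).Nonempty) :
    val H .L A B = (free H A B).sup' hf fun x => val H .R (insert x A) B := by
  obtain ⟨m, hm⟩ : ∃ m, (free H A B).card = m + 1 :=
    ⟨(free H A B).card - 1, by have := Finset.card_pos.mpr hf; omega⟩
  rw [val, hm, valAux_succ]
  simp only [h1, h2, if_false, hf, dif_pos]
  apply Finset.sup'_congr _ rfl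
  intro x hx
  have hc : (free H (insert x A) B).card = m := by
    rw [free_insert_left, Finset.card_erase_of_mem hx, hm]; omega
  rw [val, hc]

lemma val_unfold_R {H : Game} {A B : Finset ℕ} (h1 : ¬ fills H.EL A) (h2 : ¬ fills H.ER B)
    (hf : (free H A B).Nonempty) :
    val H .R A B = (free H A B).inf' hf fun x => val H .L A (insert x B) := by
  obtain ⟨m, hm⟩ : ∃ m, (free H A B).card = m + 1 :=
    ⟨(free H A B).card - 1, by have := Finset.card_pos.mpr hf; omega⟩
  rw [val, hm, valAux_succ]
  simp only [h1, h2, if_false, hf, dif_pos]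
  apply Finset.inf'_congr _ rfl
  intro x hx
  have hc : (free H A (insert x B)).card = m := by
    rw [free_insert_right, Finset.card_erase_of_mem hx, hm]; omega
  rw [val, hc]

/-! ### Greedy lemmas -/

lemma fills_insert_elim {E : Finset (Finset ℕ)} {u v : ℕ}
    (hdom : ∀ e ∈ E, u ∈ e → v ∈ e) (huv : u ≠ v) {S : Finset ℕ} (hvS : v ∉ S)
    (h : fills E (insert u S)) : fills E S := by
  obtain ⟨e, he, hsub⟩ := h
  refine ⟨e, he, fun x hx => ?_⟩
  have hune : u ∉ e := by
    intro hue
    rcases Finset.mem_insert.mp (hsub (hdom e he hue)) with h' | h'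
    · exact huv h'.symm
    · exact hvS h'
  rcases Finset.mem_insert.mp (hsub hx) with h' | h'
  · exact absurd (h' ▸ hx) hune
  · exact h'

section Greedy
variable {G : Game} {u v : ℕ}

lemma free_uv (A B : Finset ℕ) :
    free G (insert u A) (insert v B) = G.V \ (A ∪ B ∪ {u, v}) := by
  unfold free; congr 1; ext x; simp [Finset.mem_insert]; tauto

lemma free_vu (A B : Finset ℕ) :
    free G (insert v A) (insert u B) = G.V \ (A ∪ B ∪ {u, v}) := by
  unfold free; congr 1; ext x; simp [Finset.mem_insert]

variable (huv : u ≠ v)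
  (hdomL : ∀ e ∈ G.EL, u ∈ e → v ∈ e) (hdomR : ∀ e ∈ G.ER, u ∈ e → v ∈ e)

include huv hdomL hdomR in
/-- Swap lemma: Left holding `v` (and Right `u`) is at least as good for Left
as Left holding `u` and Right holding `v`. -/
lemma swap_le : ∀ n (p : Player) (A B : Finset ℕ), v ∉ A → u ∉ B → v ∉ B →
    (G.V \ (A ∪ B ∪ {u, v})).card ≤ n →
    val G p (insert u A) (insert v B) ≤ val G p (insert v A) (insert u B) := by
  intro n
  induction n with
  | zero =>
    intro p A B hvA huB hvB hcard
    have hW : G.V \ (A ∪ B ∪ {u, v}) = ∅ := Finset.card_eq_zero.mp (Nat.le_zero.mp hcard)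
    -- case analysis on RHS entry
    by_cases h1 : fills G.EL (insert v A)
    · rw [val_of_fillsL p h1]; exact val_le_two _ _ _ _
    have h1l : ¬ fills G.EL (insert u A) := by
      intro h
      exact h1 (fills_mono (fills_insert_elim hdomL huv hvA h)
        (Finset.subset_insert _ _))
    by_cases h2 : fills G.ER (insert u B)
    · have h2' : fills G.ER B := fills_insert_elim hdomR huv hvB h2
      rw [val_of_fillsR p h1l (fills_mono h2' (Finset.subset_insert _ _)),
        val_of_fillsR p h1 (fills_mono h2' (Finset.subset_insert _ _))]
    by_cases h2l : fills G.ER (insert v B)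
    · rw [val_of_fillsR p h1l h2l]; omega
    · rw [val_of_empty p h1l h2l (by rw [free_uv, hW]),
        val_of_empty p h1 h2 (by rw [free_vu, hW])]
  | succ n ih =>
    intro p A B hvA huB hvB hcard
    by_cases h1 : fills G.EL (insert v A)
    · rw [val_of_fillsL p h1]; exact val_le_two _ _ _ _
    have h1l : ¬ fills G.EL (insert u A) := by
      intro h
      exact h1 (fills_mono (fills_insert_elim hdomL huv hvA h)
        (Finset.subset_insert _ _))
    by_cases h2 : fills G.ER (insert u B)
    · have h2' : fills G.ER B := fills_insert_elim hdomR huv hvB h2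
      rw [val_of_fillsR p h1l (fills_mono h2' (Finset.subset_insert _ _)),
        val_of_fillsR p h1 (fills_mono h2' (Finset.subset_insert _ _))]
    by_cases h2l : fills G.ER (insert v B)
    · rw [val_of_fillsR p h1l h2l]; omega
    by_cases hW : G.V \ (A ∪ B ∪ {u, v}) = ∅
    · rw [val_of_empty p h1l h2l (by rw [free_uv, hW]),
        val_of_empty p h1 h2 (by rw [free_vu, hW])]
    -- recursive case
    have hWne : (G.V \ (A ∪ B ∪ {u, v})).Nonempty := Finset.nonempty_iff_ne_empty.mpr hW
    have hfl : (free G (insert u A) (insert v B)).Nonempty := by rw [free_uv]; exact hWne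
    have hfr : (free G (insert v A) (insert u B)).Nonempty := by rw [free_vu]; exact hWne
    have hxmem : ∀ x ∈ G.V \ (A ∪ B ∪ {u, v}), x ≠ u ∧ x ≠ v ∧ x ∉ A ∧ x ∉ B := by
      intro x hx
      simp only [Finset.mem_sdiff, Finset.mem_union, Finset.mem_insert,
        Finset.mem_singleton] at hx
      push_neg at hx
      tauto
    have hcard' : ∀ x ∈ G.V \ (A ∪ B ∪ {u, v}),
        ∀ C D : Finset ℕ, (C = insert x A ∧ D = B) ∨ (C = A ∧ D = insert x B) →
        (G.V \ (C ∪ D ∪ {u, v})).card ≤ n := by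
      intro x hx C D hCD
      have : G.V \ (C ∪ D ∪ {u, v}) = (G.V \ (A ∪ B ∪ {u, v})).erase x := by
        rcases hCD with ⟨hC, hD⟩ | ⟨hC, hD⟩ <;> subst hC <;> subst hD <;>
          · ext y
            simp only [Finset.mem_sdiff, Finset.mem_union, Finset.mem_insert,
              Finset.mem_singleton, Finset.mem_erase]
            tauto
      rw [this, Finset.card_erase_of_mem hx]
      omega
    cases p with
    | L =>
      rw [val_unfold_L h1l h2l hfl, val_unfold_L h1 h2 hfr]
      apply Finset.sup'_le
      intro x hx
      rw [free_uv] at hx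
      obtain ⟨hxu, hxv, hxA, hxB⟩ := hxmem x hx
      have step : val G .R (insert x (insert u A)) (insert v B)
          ≤ val G .R (insert x (insert v A)) (insert u B) := by
        rw [Finset.insert_comm x u A, Finset.insert_comm x v A]
        exact ih .R (insert x A) B (by simp [hvA, Ne.symm hxv])
          huB hvB (hcard' x hx _ _ (Or.inl ⟨rfl, rfl⟩))
      exact le_trans step (Finset.le_sup' (fun y => val G .R (insert y (insert v A)) (insert u B)) (by rw [free_vu]; exact hx))
    | R =>
      rw [val_unfold_R h1l h2l hfl, val_unfold_R h1 h2 hfr]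
      apply Finset.le_inf'
      intro x hx
      rw [free_vu] at hx
      obtain ⟨hxu, hxv, hxA, hxB⟩ := hxmem x hx
      have step : val G .L (insert u A) (insert x (insert v B))
          ≤ val G .L (insert v A) (insert x (insert u B)) := by
        rw [Finset.insert_comm x v B, Finset.insert_comm x u B]
        exact ih .L A (insert x B) hvA (by simp [huB, Ne.symm hxu])
          (by simp [hvB, Ne.symm hxv]) (hcard' x hx _ _ (Or.inr ⟨rfl, rfl⟩))
      exact le_trans (Finset.inf'_le (fun y => val G .L (insert u A) (insert y (insert v B))) (by rw [free_uv]; exact hx)) step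

end Greedy

section Greedy2
variable {G : Game} {u v : ℕ}

lemma freeAB_eq (huv : u ≠ v) (hu : u ∈ G.V) (hv : v ∈ G.V) {A B : Finset ℕ} (huA : u ∉ A) (hvA : v ∉ A) (huB : u ∉ B) (hvB : v ∉ B) :
    free G A B = insert u (insert v (G.V \ (A ∪ B ∪ {u, v}))) := by
  unfold free
  ext x
  simp only [Finset.mem_sdiff, Finset.mem_union, Finset.mem_insert, Finset.mem_singleton]
  constructor
  · rintro ⟨hxV, hxAB⟩
    by_cases hxu : x = u
    · exact Or.inl hxu
    by_cases hxv : x = v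
    · exact Or.inr (Or.inl hxv)
    · exact Or.inr (Or.inr ⟨hxV, by tauto⟩)
  · rintro (rfl | rfl | ⟨hxV, hxAB⟩)
    · exact ⟨hu, by tauto⟩
    · exact ⟨hv, by tauto⟩
    · exact ⟨hxV, by tauto⟩

lemma free_vA_B (huv : u ≠ v) (hu : u ∈ G.V) {A B : Finset ℕ} (huA : u ∉ A) (huB : u ∉ B) :
    free G (insert v A) B = insert u (G.V \ (A ∪ B ∪ {u, v})) := by
  unfold free
  ext x
  simp only [Finset.mem_sdiff, Finset.mem_union, Finset.mem_insert, Finset.mem_singleton]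
  constructor
  · rintro ⟨hxV, hxAB⟩
    by_cases hxu : x = u
    · exact Or.inl hxu
    · push_neg at hxAB; exact Or.inr ⟨hxV, by tauto⟩
  · rintro (rfl | ⟨hxV, hxAB⟩)
    · exact ⟨hu, by tauto⟩
    · exact ⟨hxV, by tauto⟩

lemma free_uA_B (huv : u ≠ v) (hv : v ∈ G.V) {A B : Finset ℕ} (hvA : v ∉ A) (hvB : v ∉ B) :
    free G (insert u A) B = insert v (G.V \ (A ∪ B ∪ {u, v})) := by
  unfold free
  ext x
  simp only [Finset.mem_sdiff, Finset.mem_union, Finset.mem_insert, Finset.mem_singleton]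
  constructor
  · rintro ⟨hxV, hxAB⟩
    by_cases hxv : x = v
    · exact Or.inl hxv
    · push_neg at hxAB; exact Or.inr ⟨hxV, by tauto⟩
  · rintro (rfl | ⟨hxV, hxAB⟩)
    · exact ⟨hv, by tauto⟩
    · exact ⟨hxV, by tauto⟩

lemma free_A_uB (huv : u ≠ v) (hv : v ∈ G.V) {A B : Finset ℕ} (hvA : v ∉ A) (hvB : v ∉ B) :
    free G A (insert u B) = insert v (G.V \ (A ∪ B ∪ {u, v})) := by
  unfold free
  ext x
  simp only [Finset.mem_sdiff, Finset.mem_union, Finset.mem_insert, Finset.mem_singleton]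
  constructor
  · rintro ⟨hxV, hxAB⟩
    by_cases hxv : x = v
    · exact Or.inl hxv
    · push_neg at hxAB; exact Or.inr ⟨hxV, by tauto⟩
  · rintro (rfl | ⟨hxV, hxAB⟩)
    · exact ⟨hv, by tauto⟩
    · exact ⟨hxV, by tauto⟩

/-- Base case of the main greedy lemma: no other free vertices. -/
lemma main_le_base (huv : u ≠ v) (hu : u ∈ G.V) (hv : v ∈ G.V)
    (hdomL : ∀ e ∈ G.EL, u ∈ e → v ∈ e) (hdomR : ∀ e ∈ G.ER, u ∈ e → v ∈ e)
    (p : Player) (A B : Finset ℕ) (huA : u ∉ A) (hvA : v ∉ A) (huB : u ∉ B) (hvB : v ∉ B)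
    (hW : G.V \ (A ∪ B ∪ {u, v}) = ∅) :
    val G p A B ≤ val G p (insert v A) (insert u B) := by
  by_cases h1 : fills G.EL (insert v A)
  · rw [val_of_fillsL p h1]; exact val_le_two _ _ _ _
  have hELA : ¬ fills G.EL A := fun h => h1 (fills_mono h (Finset.subset_insert _ _))
  by_cases h2 : fills G.ER (insert u B)
  · have h2' : fills G.ER B := fills_insert_elim hdomR huv hvB h2
    rw [val_of_fillsR p hELA h2', val_of_fillsR p h1 h2]
  by_cases hERB : fills G.ER B
  · rw [val_of_fillsR p hELA hERB]; omega
  rw [val_of_empty p h1 h2 (by rw [free_vu, hW])]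
  have hfree : free G A B = {u, v} := by
    rw [freeAB_eq huv hu hv huA hvA huB hvB, hW]
    simp
  have hfne : (free G A B).Nonempty := by rw [hfree]; exact Finset.insert_nonempty _ _
  have hELuA : ¬ fills G.EL (insert u A) := fun h =>
    hELA (fills_insert_elim hdomL huv hvA h)
  have hmid : ∀ q : Player, val G q (insert v A) (insert u B) = 1 := fun q =>
    val_of_empty q h1 h2 (by rw [free_vu, hW])
  cases p with
  | L =>
    rw [val_unfold_L hELA hERB hfne]
    apply Finset.sup'_le
    intro x hx
    rw [hfree] at hx
    rcases Finset.mem_insert.mp hx with hxu | hx2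
    · -- x = u
      subst hxu
      have hfx : free G (insert x A) B = {v} := by
        rw [free_uA_B huv hv hvA hvB, hW]; simp
      have hfxne : (free G (insert x A) B).Nonempty := by
        rw [hfx]; exact Finset.singleton_nonempty v
      rw [val_unfold_R hELuA hERB hfxne]
      have hvmem : v ∈ free G (insert x A) B := by rw [hfx]; exact Finset.mem_singleton_self v
      refine le_trans (Finset.inf'_le (fun y => val G .L (insert x A) (insert y B)) hvmem) ?_
      by_cases hfin : fills G.ER (insert v B)
      · rw [val_of_fillsR _ hELuA hfin]; omega
      · rw [val_of_empty (Player.L) hELuA hfin (by rw [free_uv, hW])]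
    · -- x = v
      have hxv : x = v := Finset.mem_singleton.mp hx2
      subst hxv
      have hfx : free G (insert x A) B = {u} := by
        rw [free_vA_B huv hu huA huB, hW]; simp
      have hfxne : (free G (insert x A) B).Nonempty := by
        rw [hfx]; exact Finset.singleton_nonempty u
      rw [val_unfold_R h1 hERB hfxne]
      have humem : u ∈ free G (insert x A) B := by rw [hfx]; exact Finset.mem_singleton_self u
      refine le_trans (Finset.inf'_le (fun y => val G .L (insert x A) (insert y B)) humem) ?_
      rw [hmid .L]
  | R =>
    rw [val_unfold_R hELA hERB hfne]
    have humem : u ∈ free G A B := by rw [hfree]; exact Finset.mem_insert_self _ _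
    refine le_trans (Finset.inf'_le (fun y => val G .L A (insert y B)) humem) ?_
    have hfx : free G A (insert u B) = {v} := by
      rw [free_A_uB huv hv hvA hvB, hW]; simp
    have hfxne : (free G A (insert u B)).Nonempty := by
      rw [hfx]; exact Finset.singleton_nonempty v
    rw [val_unfold_L hELA h2 hfxne]
    apply Finset.sup'_le
    intro y hy
    rw [hfx, Finset.mem_singleton] at hy
    subst hy
    rw [hmid .R]

/-- Main greedy lemma: giving `v` to Left and `u` to Right does not hurt Left. -/
lemma main_le (huv : u ≠ v) (hu : u ∈ G.V) (hv : v ∈ G.V)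
    (hdomL : ∀ e ∈ G.EL, u ∈ e → v ∈ e) (hdomR : ∀ e ∈ G.ER, u ∈ e → v ∈ e) :
    ∀ n (p : Player) (A B : Finset ℕ), u ∉ A → v ∉ A → u ∉ B → v ∉ B →
    (G.V \ (A ∪ B ∪ {u, v})).card ≤ n →
    val G p A B ≤ val G p (insert v A) (insert u B) := by
  intro n
  induction n with
  | zero =>
    intro p A B huA hvA huB hvB hcard
    exact main_le_base huv hu hv hdomL hdomR p A B huA hvA huB hvB
      (Finset.card_eq_zero.mp (Nat.le_zero.mp hcard))
  | succ n ih =>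
    intro p A B huA hvA huB hvB hcard
    by_cases hW : G.V \ (A ∪ B ∪ {u, v}) = ∅
    · exact main_le_base huv hu hv hdomL hdomR p A B huA hvA huB hvB hW
    by_cases h1 : fills G.EL (insert v A)
    · rw [val_of_fillsL p h1]; exact val_le_two _ _ _ _
    have hELA : ¬ fills G.EL A := fun h => h1 (fills_mono h (Finset.subset_insert _ _))
    by_cases h2 : fills G.ER (insert u B)
    · have h2' : fills G.ER B := fills_insert_elim hdomR huv hvB h2
      rw [val_of_fillsR p hELA h2', val_of_fillsR p h1 h2]
    by_cases hERB : fills G.ER B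
    · rw [val_of_fillsR p hELA hERB]; omega
    have hWne : (G.V \ (A ∪ B ∪ {u, v})).Nonempty := Finset.nonempty_iff_ne_empty.mpr hW
    have hfne : (free G A B).Nonempty := by
      rw [freeAB_eq huv hu hv huA hvA huB hvB]; exact Finset.insert_nonempty _ _
    have hELuA : ¬ fills G.EL (insert u A) := fun h =>
      hELA (fills_insert_elim hdomL huv hvA h)
    have hxmem : ∀ x ∈ G.V \ (A ∪ B ∪ {u, v}), x ≠ u ∧ x ≠ v ∧ x ∉ A ∧ x ∉ B := by
      intro x hx
      simp only [Finset.mem_sdiff, Finset.mem_union, Finset.mem_insert,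
        Finset.mem_singleton] at hx
      push_neg at hx
      tauto
    have hcard' : ∀ x ∈ G.V \ (A ∪ B ∪ {u, v}),
        ∀ C D : Finset ℕ, (C = insert x A ∧ D = B) ∨ (C = A ∧ D = insert x B) →
        (G.V \ (C ∪ D ∪ {u, v})).card ≤ n := by
      intro x hx C D hCD
      have : G.V \ (C ∪ D ∪ {u, v}) = (G.V \ (A ∪ B ∪ {u, v})).erase x := by
        rcases hCD with ⟨hC, hD⟩ | ⟨hC, hD⟩ <;> subst hC <;> subst hD <;>
          · ext y
            simp only [Finset.mem_sdiff, Finset.mem_union, Finset.mem_insert,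
              Finset.mem_singleton, Finset.mem_erase]
            tauto
      rw [this, Finset.card_erase_of_mem hx]
      omega
    have hfvu : (free G (insert v A) (insert u B)).Nonempty := by rw [free_vu]; exact hWne
    cases p with
    | L =>
      rw [val_unfold_L hELA hERB hfne]
      apply Finset.sup'_le
      intro x hx
      rw [freeAB_eq huv hu hv huA hvA huB hvB] at hx
      rcases Finset.mem_insert.mp hx with hxu | hx'
      · -- x = u : Left plays u; dominated via swap
        subst hxu
        have hfx : (free G (insert x A) B).Nonempty := by
          rw [free_uA_B huv hv hvA hvB]; exact Finset.insert_nonempty _ _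
        have hvmem : v ∈ free G (insert x A) B := by
          rw [free_uA_B huv hv hvA hvB]; exact Finset.mem_insert_self _ _
        rw [val_unfold_R hELuA hERB hfx]
        refine le_trans (Finset.inf'_le
          (fun y => val G .L (insert x A) (insert y B)) hvmem) ?_
        exact swap_le huv hdomL hdomR (n+1) .L A B hvA huB hvB hcard
      rcases Finset.mem_insert.mp hx' with hxv | hxW
      · -- x = v : Right can answer u
        subst hxv
        have hfx : (free G (insert x A) B).Nonempty := by
          rw [free_vA_B huv hu huA huB]; exact Finset.insert_nonempty _ _
        have humem : u ∈ free G (insert x A) B := by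
          rw [free_vA_B huv hu huA huB]; exact Finset.mem_insert_self _ _
        rw [val_unfold_R h1 hERB hfx]
        exact Finset.inf'_le (fun y => val G .L (insert x A) (insert y B)) humem
      · -- x ∈ W
        obtain ⟨hxu, hxv, hxA, hxB⟩ := hxmem x hxW
        have step : val G .R (insert x A) B
            ≤ val G .R (insert x (insert v A)) (insert u B) := by
          rw [Finset.insert_comm x v A]
          exact ih .R (insert x A) B (by simp [huA, Ne.symm hxu])
            (by simp [hvA, Ne.symm hxv]) huB hvB
            (hcard' x hxW _ _ (Or.inl ⟨rfl, rfl⟩))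
        refine le_trans step ?_
        rw [val_unfold_L h1 h2 hfvu]
        exact Finset.le_sup' (fun y => val G .R (insert y (insert v A)) (insert u B))
          (by rw [free_vu]; exact hxW)
    | R =>
      rw [val_unfold_R hELA hERB hfne, val_unfold_R h1 h2 hfvu]
      obtain ⟨y, hy, hyval⟩ := Finset.exists_mem_eq_inf' hfvu
        (fun y => val G .L (insert v A) (insert y (insert u B)))
      rw [hyval]
      rw [free_vu] at hy
      obtain ⟨hyu, hyv, hyA, hyB⟩ := hxmem y hy
      have hymem : y ∈ free G A B := by
        rw [freeAB_eq huv hu hv huA hvA huB hvB]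
        exact Finset.mem_insert_of_mem (Finset.mem_insert_of_mem (by exact hy))
      refine le_trans (Finset.inf'_le (fun z => val G .L A (insert z B)) hymem) ?_
      have step : val G .L A (insert y B)
          ≤ val G .L (insert v A) (insert u (insert y B)) :=
        ih .L A (insert y B) huA hvA (by simp [huB, Ne.symm hyu])
          (by simp [hvB, Ne.symm hyv]) (hcard' y hy _ _ (Or.inr ⟨rfl, rfl⟩))
      rw [Finset.insert_comm u y B] at step
      exact step

-- need updLR def in dev file
end Greedy2

section Upd
variable {G : Game} {u v : ℕ}

/-- `G' := updLR G v u` : Left picked `v`, Right picked `u`. -/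
lemma updLR_fillsL (huv : u ≠ v) {A : Finset ℕ} (huA : u ∉ A)
    (hdomL : ∀ e ∈ G.EL, u ∈ e → v ∈ e) :
    fills (updLR G v u).EL A ↔ fills G.EL (insert v A) := by
  constructor
  · rintro ⟨e', he', hsub⟩
    simp only [updLR, Finset.mem_image, Finset.mem_filter] at he'
    obtain ⟨e, ⟨heEL, hue⟩, rfl⟩ := he'
    refine ⟨e, heEL, fun x hx => ?_⟩
    by_cases hxv : x = v
    · exact Finset.mem_insert.mpr (Or.inl hxv)
    · exact Finset.mem_insert.mpr (Or.inr (hsub (Finset.mem_erase.mpr ⟨hxv, hx⟩)))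
  · rintro ⟨e, heEL, hsub⟩
    have hue : u ∉ e := by
      intro hue
      rcases Finset.mem_insert.mp (hsub hue) with h' | h'
      · exact huv h'
      · exact huA h'
    refine ⟨e.erase v, ?_, fun x hx => ?_⟩
    · simp only [updLR, Finset.mem_image, Finset.mem_filter]
      exact ⟨e, ⟨heEL, hue⟩, rfl⟩
    · obtain ⟨hxv, hxe⟩ := Finset.mem_erase.mp hx
      rcases Finset.mem_insert.mp (hsub hxe) with h' | h'
      · exact absurd h' hxv
      · exact h'

lemma updLR_fillsR (huv : u ≠ v) {B : Finset ℕ} (hvB : v ∉ B)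
    (hdomR : ∀ e ∈ G.ER, u ∈ e → v ∈ e) :
    fills (updLR G v u).ER B ↔ fills G.ER (insert u B) := by
  constructor
  · rintro ⟨f', hf', hsub⟩
    simp only [updLR, Finset.mem_image, Finset.mem_filter] at hf'
    obtain ⟨f, ⟨hfER, hvf⟩, rfl⟩ := hf'
    refine ⟨f, hfER, fun x hx => ?_⟩
    by_cases hxu : x = u
    · exact Finset.mem_insert.mpr (Or.inl hxu)
    · exact Finset.mem_insert.mpr (Or.inr (hsub (Finset.mem_erase.mpr ⟨hxu, hx⟩)))
  · rintro ⟨f, hfER, hsub⟩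
    have hvf : v ∉ f := by
      intro hvf
      rcases Finset.mem_insert.mp (hsub hvf) with h' | h'
      · exact huv h'.symm
      · exact hvB h'
    have huf : u ∉ f := fun huf => hvf (hdomR f hfER huf)
    refine ⟨f.erase u, ?_, fun x hx => ?_⟩
    · simp only [updLR, Finset.mem_image, Finset.mem_filter]
      exact ⟨f, ⟨hfER, hvf⟩, rfl⟩
    · obtain ⟨hxu, hxf⟩ := Finset.mem_erase.mp hx
      rcases Finset.mem_insert.mp (hsub hxf) with h' | h'
      · exact absurd h' hxu
      · exact h'

lemma updLR_free (A B : Finset ℕ) :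
    free (updLR G v u) A B = G.V \ (A ∪ B ∪ {u, v}) := by
  unfold free updLR
  ext x
  simp only [Finset.mem_sdiff, Finset.mem_erase, Finset.mem_union, Finset.mem_insert,
    Finset.mem_singleton]
  tauto

/-- Value of the updated game equals the value of `G` at position `({v} ∪ A, {u} ∪ B)`. -/
lemma updLR_val (huv : u ≠ v)
    (hdomL : ∀ e ∈ G.EL, u ∈ e → v ∈ e) (hdomR : ∀ e ∈ G.ER, u ∈ e → v ∈ e) :
    ∀ n (p : Player) (A B : Finset ℕ), u ∉ A → v ∉ A → u ∉ B → v ∉ B →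
    (G.V \ (A ∪ B ∪ {u, v})).card ≤ n →
    val (updLR G v u) p A B = val G p (insert v A) (insert u B) := by
  intro n
  induction n with
  | zero =>
    intro p A B huA hvA huB hvB hcard
    have hW : G.V \ (A ∪ B ∪ {u, v}) = ∅ := Finset.card_eq_zero.mp (Nat.le_zero.mp hcard)
    by_cases h1 : fills G.EL (insert v A)
    · rw [val_of_fillsL p h1, val_of_fillsL p ((updLR_fillsL huv huA hdomL).mpr h1)]
    have h1' : ¬ fills (updLR G v u).EL A := fun h => h1 ((updLR_fillsL huv huA hdomL).mp h)
    by_cases h2 : fills G.ER (insert u B)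
    · rw [val_of_fillsR p h1 h2, val_of_fillsR p h1' ((updLR_fillsR huv hvB hdomR).mpr h2)]
    have h2' : ¬ fills (updLR G v u).ER B := fun h => h2 ((updLR_fillsR huv hvB hdomR).mp h)
    rw [val_of_empty p h1 h2 (by rw [free_vu, hW]),
      val_of_empty p h1' h2' (by rw [updLR_free, hW])]
  | succ n ih =>
    intro p A B huA hvA huB hvB hcard
    by_cases h1 : fills G.EL (insert v A)
    · rw [val_of_fillsL p h1, val_of_fillsL p ((updLR_fillsL huv huA hdomL).mpr h1)]
    have h1' : ¬ fills (updLR G v u).EL A := fun h => h1 ((updLR_fillsL huv huA hdomL).mp h)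
    by_cases h2 : fills G.ER (insert u B)
    · rw [val_of_fillsR p h1 h2, val_of_fillsR p h1' ((updLR_fillsR huv hvB hdomR).mpr h2)]
    have h2' : ¬ fills (updLR G v u).ER B := fun h => h2 ((updLR_fillsR huv hvB hdomR).mp h)
    by_cases hW : G.V \ (A ∪ B ∪ {u, v}) = ∅
    · rw [val_of_empty p h1 h2 (by rw [free_vu, hW]),
        val_of_empty p h1' h2' (by rw [updLR_free, hW])]
    have hWne : (G.V \ (A ∪ B ∪ {u, v})).Nonempty := Finset.nonempty_iff_ne_empty.mpr hW
    have hf1 : (free (updLR G v u) A B).Nonempty := by rw [updLR_free]; exact hWne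
    have hf2 : (free G (insert v A) (insert u B)).Nonempty := by rw [free_vu]; exact hWne
    have hxmem : ∀ x ∈ G.V \ (A ∪ B ∪ {u, v}), x ≠ u ∧ x ≠ v ∧ x ∉ A ∧ x ∉ B := by
      intro x hx
      simp only [Finset.mem_sdiff, Finset.mem_union, Finset.mem_insert,
        Finset.mem_singleton] at hx
      push_neg at hx
      tauto
    have hcard' : ∀ x ∈ G.V \ (A ∪ B ∪ {u, v}),
        ∀ C D : Finset ℕ, (C = insert x A ∧ D = B) ∨ (C = A ∧ D = insert x B) →
        (G.V \ (C ∪ D ∪ {u, v})).card ≤ n := by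
      intro x hx C D hCD
      have : G.V \ (C ∪ D ∪ {u, v}) = (G.V \ (A ∪ B ∪ {u, v})).erase x := by
        rcases hCD with ⟨hC, hD⟩ | ⟨hC, hD⟩ <;> subst hC <;> subst hD <;>
          · ext y
            simp only [Finset.mem_sdiff, Finset.mem_union, Finset.mem_insert,
              Finset.mem_singleton, Finset.mem_erase]
            tauto
      rw [this, Finset.card_erase_of_mem hx]
      omega
    cases p with
    | L =>
      rw [val_unfold_L h1' h2' hf1, val_unfold_L h1 h2 hf2]
      apply Finset.sup'_congr hf1
      · rw [updLR_free, free_vu]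
      · intro x hx
        rw [updLR_free] at hx
        obtain ⟨hxu, hxv, hxA, hxB⟩ := hxmem x hx
        rw [ih .R (insert x A) B (by simp [huA, Ne.symm hxu]) (by simp [hvA, Ne.symm hxv])
          huB hvB (hcard' x hx _ _ (Or.inl ⟨rfl, rfl⟩)), Finset.insert_comm]
    | R =>
      rw [val_unfold_R h1' h2' hf1, val_unfold_R h1 h2 hf2]
      apply Finset.inf'_congr hf1
      · rw [updLR_free, free_vu]
      · intro x hx
        rw [updLR_free] at hx
        obtain ⟨hxu, hxv, hxA, hxB⟩ := hxmem x hx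
        rw [ih .L A (insert x B) huA hvA (by simp [huB, Ne.symm hxu])
          (by simp [hvB, Ne.symm hxv]) (hcard' x hx _ _ (Or.inr ⟨rfl, rfl⟩)),
          Finset.insert_comm]

end Upd
section FirstMove
variable {G : Game} {u v : ℕ}

lemma not_fills_small {E : Finset (Finset ℕ)} (hE : ∀ e ∈ E, e.Nonempty)
    (hno1 : ∀ e ∈ E, e.card ≠ 1) {S : Finset ℕ} (hS : S.card ≤ 1) : ¬ fills E S := by
  rintro ⟨e, he, hsub⟩
  have h1 : 1 ≤ e.card := Finset.card_pos.mpr (hE e he)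
  have h2 : e.card ≤ S.card := Finset.card_le_card hsub
  have := hno1 e he
  omega

lemma wf_updLR (hWF : WellFormed G) (hno1 : ∀ e ∈ G.EL ∪ G.ER, e.card ≠ 1) :
    WellFormed (updLR G v u) := by
  constructor
  · intro e' he'
    simp only [updLR, Finset.mem_image, Finset.mem_filter] at he'
    obtain ⟨e, ⟨heEL, hue⟩, rfl⟩ := he'
    obtain ⟨hsub, hne⟩ := hWF.1 e heEL
    constructor
    · intro x hx
      obtain ⟨hxv, hxe⟩ := Finset.mem_erase.mp hx
      have hxu : x ≠ u := fun h => hue (h ▸ hxe)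
      simp only [updLR, Finset.mem_erase]
      exact ⟨hxu, hxv, hsub hxe⟩
    · rw [Finset.Nonempty, ]
      by_contra hemp
      push_neg at hemp
      have : e ⊆ {v} := fun x hx => by
        by_contra hxv
        exact hemp x (Finset.mem_erase.mpr ⟨fun h => hxv (h ▸ Finset.mem_singleton_self v), hx⟩)
      have h1 : e.card ≤ 1 := le_trans (Finset.card_le_card this) (by simp)
      have h2 : 1 ≤ e.card := Finset.card_pos.mpr hne
      exact hno1 e (Finset.mem_union_left _ heEL) (by omega)
  · intro e' he'
    simp only [updLR, Finset.mem_image, Finset.mem_filter] at he'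
    obtain ⟨e, ⟨heER, hve⟩, rfl⟩ := he'
    obtain ⟨hsub, hne⟩ := hWF.2 e heER
    constructor
    · intro x hx
      obtain ⟨hxu, hxe⟩ := Finset.mem_erase.mp hx
      have hxv : x ≠ v := fun h => hve (h ▸ hxe)
      simp only [updLR, Finset.mem_erase]
      exact ⟨hxu, hxv, hsub hxe⟩
    · rw [Finset.Nonempty]
      by_contra hemp
      push_neg at hemp
      have : e ⊆ {u} := fun x hx => by
        by_contra hxu
        exact hemp x (Finset.mem_erase.mpr ⟨fun h => hxu (h ▸ Finset.mem_singleton_self u), hx⟩)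
      have h1 : e.card ≤ 1 := le_trans (Finset.card_le_card this) (by simp)
      have h2 : 1 ≤ e.card := Finset.card_pos.mpr hne
      exact hno1 e (Finset.mem_union_right _ heER) (by omega)

lemma greedy_first (hWF : WellFormed G) (hno1 : ∀ e ∈ G.EL ∪ G.ER, e.card ≠ 1)
    (he : ({u, v} : Finset ℕ) ∈ G.EL) (huv : u ≠ v) (hu : u ∈ G.V) (hv : v ∈ G.V)
    (hdomL : ∀ e ∈ G.EL, u ∈ e → v ∈ e) (hdomR : ∀ e ∈ G.ER, u ∈ e → v ∈ e) :
    val G .L ∅ ∅ ≤ val G .R (insert v ∅) ∅ := by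
  have hELne : ∀ e ∈ G.EL, e.Nonempty := fun e he' => (hWF.1 e he').2
  have hERne : ∀ e ∈ G.ER, e.Nonempty := fun e he' => (hWF.2 e he').2
  have hno1L : ∀ e ∈ G.EL, e.card ≠ 1 := fun e he' => hno1 e (Finset.mem_union_left _ he')
  have hno1R : ∀ e ∈ G.ER, e.card ≠ 1 := fun e he' => hno1 e (Finset.mem_union_right _ he')
  have h1 : ¬ fills G.EL (insert v ∅) := not_fills_small hELne hno1L (by simp)
  have h2 : ¬ fills G.ER (∅ : Finset ℕ) := not_fills_small hERne hno1R (by simp)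
  have hfne : (free G (insert v ∅) ∅).Nonempty := by
    refine ⟨u, ?_⟩
    simp [free, hu, huv]
  rw [val_unfold_R h1 h2 hfne]
  apply Finset.le_inf'
  intro y hy
  have hyv : y ≠ v := by
    simp only [free, Finset.mem_sdiff, Finset.mem_union, Finset.mem_insert] at hy
    tauto
  have hyV : y ∈ G.V := by
    simp only [free, Finset.mem_sdiff] at hy
    exact hy.1
  by_cases hyu : y = u
  · subst hyu
    have := main_le huv hu hv hdomL hdomR (G.V \ ((∅:Finset ℕ) ∪ (∅:Finset ℕ) ∪ {y, v})).card
      .L ∅ ∅ (by simp) (by simp) (by simp) (by simp) le_rfl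
    exact this
  · -- Right played y ≠ u; Left answers u and wins immediately
    refine le_trans (val_le_two G .L ∅ ∅) ?_
    have h2y : ¬ fills G.ER (insert y ∅) := not_fills_small hERne hno1R (by simp)
    have hfne2 : (free G (insert v ∅) (insert y ∅)).Nonempty := by
      refine ⟨u, ?_⟩
      simp [free, hu, huv, Ne.symm hyu]
    rw [val_unfold_L h1 h2y hfne2]
    have humem : u ∈ free G (insert v ∅) (insert y ∅) := by
      simp [free, hu, huv, Ne.symm hyu]
    have hwin : val G .R (insert u (insert v ∅)) (insert y ∅) = 2 := by
      apply val_of_fillsL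
      exact ⟨{u, v}, he, by intro x hx; simpa using hx⟩
    calc (2:ℕ) = val G .R (insert u (insert v ∅)) (insert y ∅) := hwin.symm
      _ ≤ _ := Finset.le_sup' (fun x => val G .R (insert x (insert v ∅)) (insert y ∅)) humem

end FirstMove

/-! ### History lemmas -/

lemma Player.other_other (p : Player) : p.other.other = p := by cases p <;> rfl

lemma Player.L_ne_R : (Player.L) ≠ (Player.R) := by decide

lemma mover_zero (s : Player) : mover s 0 = s := by simp [mover]

lemma mover_succ (s : Player) (n : ℕ) : mover s (n + 1) = (mover s n).other := by
  by_cases h : n % 2 = 0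
  · have h1 : (n + 1) % 2 = 1 := by omega
    simp [mover, h, h1]
  · have h0 : n % 2 = 1 := by omega
    have h1 : (n + 1) % 2 = 0 := by omega
    simp [mover, h0, h1, Player.other_other]

lemma picked_nil (s p : Player) : picked s p [] = ∅ := by simp [picked]

lemma picked_snoc (s p : Player) (h : List ℕ) (x : ℕ) :
    picked s p (h ++ [x]) =
      if mover s h.length = p then insert x (picked s p h) else picked s p h := by
  unfold picked
  have hlen : (h ++ [x]).length = h.length + 1 := by simp
  rw [hlen, Finset.range_add_one, Finset.filter_insert]
  have hagree : ∀ i ∈ (Finset.range h.length).filter fun i => mover s i = p,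
      (h ++ [x]).getD i 0 = h.getD i 0 := by
    intro i hi
    have : i < h.length := Finset.mem_range.mp (Finset.mem_filter.mp hi).1
    exact List.getD_append _ _ _ _ this
  by_cases hm : mover s h.length = p
  · rw [if_pos hm, if_pos hm, Finset.image_insert]
    have hx : (h ++ [x]).getD h.length 0 = x := by
      rw [List.getD_append_right _ _ _ _ le_rfl]
      simp
    rw [hx]
    congr 1
    exact Finset.image_congr fun i hi => hagree i hi
  · rw [if_neg hm, if_neg hm]
    exact Finset.image_congr fun i hi => hagree i hi

lemma mem_of_mem_picked {s p : Player} {h : List ℕ} {x : ℕ} (hx : x ∈ picked s p h) :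
    x ∈ h := by
  obtain ⟨i, hi, rfl⟩ := Finset.mem_image.mp hx
  have hilt : i < h.length := Finset.mem_range.mp (Finset.mem_filter.mp hi).1
  rw [List.getD_eq_getElem _ _ hilt]
  exact List.getElem_mem _

lemma toFinset_eq_picked_union (s : Player) (h : List ℕ) :
    h.toFinset = picked s .L h ∪ picked s .R h := by
  apply Finset.Subset.antisymm
  · intro x hx
    rw [List.mem_toFinset] at hx
    obtain ⟨i, hilt, hieq⟩ := List.mem_iff_getElem.mp hx
    have hgd : h.getD i 0 = x := by rw [List.getD_eq_getElem _ _ hilt]; exact hieq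
    rcases hp : mover s i with _ | _
    · apply Finset.mem_union_left
      exact Finset.mem_image.mpr ⟨i, Finset.mem_filter.mpr
        ⟨Finset.mem_range.mpr hilt, hp⟩, hgd⟩
    · apply Finset.mem_union_right
      exact Finset.mem_image.mpr ⟨i, Finset.mem_filter.mpr
        ⟨Finset.mem_range.mpr hilt, hp⟩, hgd⟩
  · intro x hx
    rw [List.mem_toFinset]
    rcases Finset.mem_union.mp hx with hx' | hx' <;> exact mem_of_mem_picked hx'

lemma valid_length_le {H : Game} {s : Player} {h : List ℕ} (hv : ValidHist H s h) :
    h.length ≤ H.V.card := by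
  have hsub : h.toFinset ⊆ H.V := fun x hx => hv.2.1 x (List.mem_toFinset.mp hx)
  have := Finset.card_le_card hsub
  rwa [List.toFinset_card_of_nodup hv.1] at this

lemma free_picked_eq {H : Game} (s : Player) (h : List ℕ) :
    free H (picked s .L h) (picked s .R h) = H.V \ h.toFinset := by
  rw [free, toFinset_eq_picked_union s h]

lemma free_picked_nonempty {H : Game} {s : Player} {h : List ℕ} (hv : ValidHist H s h)
    (hlen : h.length < H.V.card) :
    (free H (picked s .L h) (picked s .R h)).Nonempty := by
  rw [free_picked_eq]
  rw [← Finset.card_pos, Finset.card_sdiff_of_subset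
    (fun x hx => hv.2.1 x (List.mem_toFinset.mp hx))]
  rw [List.toFinset_card_of_nodup hv.1]
  omega

lemma valid_take {H : Game} {s : Player} {h : List ℕ} (hv : ValidHist H s h) (k : ℕ) :
    ValidHist H s (h.take k) := by
  refine ⟨hv.1.sublist (List.take_sublist _ _), fun x hx => hv.2.1 x (List.mem_of_mem_take hx),
    fun j hj => ?_⟩
  rw [List.length_take] at hj
  rw [List.take_take]
  have hjk : min j k = j := by omega
  rw [hjk]
  exact hv.2.2 j (by omega)

lemma follows_take {s p : Player} {σ : Strategy} {h : List ℕ} (hf : Follows s p σ h) (k : ℕ) :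
    Follows s p σ (h.take k) := by
  intro j hj hm
  have hj' := hj
  rw [List.length_take] at hj'
  have hjk : j < k := by omega
  have hjh : j < h.length := by omega
  rw [List.take_take]
  have : min j k = j := by omega
  rw [this]
  rw [List.getD_eq_getElem _ _ hj, List.getElem_take, ← List.getD_eq_getElem _ _ hjh]
  exact hf j hjh hm

lemma valid_of_snoc {H : Game} {s : Player} {h : List ℕ} {x : ℕ}
    (hv : ValidHist H s (h ++ [x])) : ValidHist H s h := by
  have := valid_take hv h.length
  rwa [List.take_left] at this

lemma follows_of_snoc {s p : Player} {σ : Strategy} {h : List ℕ} {x : ℕ}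
    (hf : Follows s p σ (h ++ [x])) : Follows s p σ h := by
  have := follows_take hf h.length
  rwa [List.take_left] at this

lemma not_ended_of_snoc {H : Game} {s : Player} {h : List ℕ} {x : ℕ}
    (hv : ValidHist H s (h ++ [x])) : ¬ ended H s h := by
  have := hv.2.2 h.length (by simp)
  rwa [List.take_left] at this
/-! ### Workhorse: strategies achieving the value -/

lemma not_both_fills {H : Game} {s : Player} {h : List ℕ} (hWF : WellFormed H)
    (hv : ValidHist H s h) (hR : fills H.ER (picked s .R h)) :
    ¬ fills H.EL (picked s .L h) := by
  rcases List.eq_nil_or_concat h with rfl | ⟨h', x, rfl⟩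
  · rw [picked_nil] at hR
    obtain ⟨e, heE, hsub⟩ := hR
    obtain ⟨-, hne⟩ := hWF.2 e heE
    rw [Finset.subset_empty] at hsub
    rw [hsub] at hne
    exact absurd hne (by simp)
  · rw [List.concat_eq_append] at *
    have hne := not_ended_of_snoc hv
    rw [ended] at hne
    push_neg at hne
    cases hm : mover s h'.length with
    | L =>
      rw [picked_snoc, if_neg (by rw [hm]; exact fun hc => Player.L_ne_R hc)] at hR
      exact absurd hR hne.2
    | R =>
      rw [picked_snoc, if_neg (by rw [hm]; exact fun hc => Player.L_ne_R hc.symm)]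
      exact hne.1

section Workhorse
variable {H : Game} {s : Player} {t : ℕ}

/-- Invariant for a Left strategy that maintains the value above `t`. -/
lemma invariant_L {σ : Strategy}
    (hbase : t ≤ val H s ∅ ∅)
    (hσ : ∀ h, ValidHist H s h → Follows s .L σ h → ¬ ended H s h →
      h.length < H.V.card → mover s h.length = .L →
      t ≤ val H .L (picked s .L h) (picked s .R h) →
      σ h ∈ free H (picked s .L h) (picked s .R h) ∧
      t ≤ val H .R (insert (σ h) (picked s .L h)) (picked s .R h)) :
    ∀ h, ValidHist H s h → Follows s .L σ h →
      t ≤ val H (mover s h.length) (picked s .L h) (picked s .R h) := by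
  intro h
  induction h using List.reverseRecOn with
  | nil =>
    intro _ _
    simpa [picked_nil, mover_zero] using hbase
  | append_singleton h x ih =>
    intro hv hf
    have hv' := valid_of_snoc hv
    have hf' := follows_of_snoc hf
    have hnend := not_ended_of_snoc hv
    have hlen : h.length < H.V.card := by
      have := valid_length_le hv
      simp only [List.length_append, List.length_singleton] at this
      omega
    have IH := ih hv' hf'
    have hlen1 : (h ++ [x]).length = h.length + 1 := by simp
    rw [hlen1, mover_succ, picked_snoc, picked_snoc]
    cases hm : mover s h.length with
    | L =>
      have hxσ : x = σ h := by
        have := hf h.length (by simp) hm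
        rw [List.getD_append_right _ _ _ _ le_rfl, List.take_left] at this
        simpa using this
      obtain ⟨-, hval⟩ := hσ h hv' hf' hnend hlen hm (by rw [hm] at IH; exact IH)
      rw [if_pos rfl, if_neg (by decide : ¬(Player.L = Player.R))]
      simp only [Player.other]
      rw [hxσ]
      exact hval
    | R =>
      have hxfree : x ∈ free H (picked s .L h) (picked s .R h) := by
        rw [free_picked_eq, Finset.mem_sdiff, List.mem_toFinset]
        constructor
        · exact hv.2.1 x (by simp)
        · intro hxh
          have : ¬ (h ++ [x]).Nodup := by
            simp [List.nodup_append, hxh]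
          exact this hv.1
      rw [hm] at IH
      have hnL : ¬ fills H.EL (picked s .L h) := fun hc => hnend (Or.inl hc)
      have hnR : ¬ fills H.ER (picked s .R h) := fun hc => hnend (Or.inr hc)
      have hufd := val_unfold_R hnL hnR ⟨x, hxfree⟩
      rw [hufd] at IH
      have := le_trans IH (Finset.inf'_le (fun y => val H .L (picked s .L h)
        (insert y (picked s .R h))) hxfree)
      rw [if_neg (by decide : ¬(Player.R = Player.L)), if_pos rfl]
      simpa [Player.other] using this

/-- A strategy satisfying `hσ` is legal. -/
lemma legal_L {σ : Strategy}
    (hbase : t ≤ val H s ∅ ∅)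
    (hσ : ∀ h, ValidHist H s h → Follows s .L σ h → ¬ ended H s h →
      h.length < H.V.card → mover s h.length = .L →
      t ≤ val H .L (picked s .L h) (picked s .R h) →
      σ h ∈ free H (picked s .L h) (picked s .R h) ∧
      t ≤ val H .R (insert (σ h) (picked s .L h)) (picked s .R h)) :
    Legal H s .L σ := by
  intro h hv hf hnend hlen hm
  have hIH := invariant_L hbase hσ h hv hf
  rw [hm] at hIH
  obtain ⟨hmem, -⟩ := hσ h hv hf hnend hlen hm hIH
  rw [free_picked_eq, Finset.mem_sdiff, List.mem_toFinset] at hmem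
  exact ⟨hmem.1, hmem.2⟩

lemma conclude_L_win {h : List ℕ} (hWF : WellFormed H) (hv : ValidHist H s h)
    (hcomp : Complete H s h)
    (hval : 2 ≤ val H (mover s h.length) (picked s .L h) (picked s .R h)) :
    fills H.EL (picked s .L h) := by
  by_contra hnf
  rcases hcomp with hend | hfull
  · rcases hend with hL | hR
    · exact hnf hL
    · rw [val_of_fillsR _ hnf hR] at hval; omega
  · by_cases hR : fills H.ER (picked s .R h)
    · rw [val_of_fillsR _ hnf hR] at hval; omega
    have hfree : free H (picked s .L h) (picked s .R h) = ∅ := by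
      rw [free_picked_eq]
      have hsub : h.toFinset ⊆ H.V := fun x hx => hv.2.1 x (List.mem_toFinset.mp hx)
      have hcard : H.V.card ≤ h.toFinset.card := by
        rw [List.toFinset_card_of_nodup hv.1, hfull]
      rw [Finset.eq_of_subset_of_card_le hsub hcard]
      simp
    rw [val_of_empty _ hnf hR hfree] at hval
    omega

lemma conclude_L_draw {h : List ℕ} (hWF : WellFormed H) (hv : ValidHist H s h)
    (hcomp : Complete H s h)
    (hval : 1 ≤ val H (mover s h.length) (picked s .L h) (picked s .R h)) :
    ¬ fills H.ER (picked s .R h) := by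
  intro hR
  have hnL := not_both_fills hWF hv hR
  rw [val_of_fillsR _ hnL hR] at hval
  omega

/-- Dual: invariant for a Right strategy keeping the value at most `t`. -/
lemma invariant_R {τ : Strategy}
    (hbase : val H s ∅ ∅ ≤ t)
    (hτ : ∀ h, ValidHist H s h → Follows s .R τ h → ¬ ended H s h →
      h.length < H.V.card → mover s h.length = .R →
      val H .R (picked s .L h) (picked s .R h) ≤ t →
      τ h ∈ free H (picked s .L h) (picked s .R h) ∧
      val H .L (picked s .L h) (insert (τ h) (picked s .R h)) ≤ t) :
    ∀ h, ValidHist H s h → Follows s .R τ h →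
      val H (mover s h.length) (picked s .L h) (picked s .R h) ≤ t := by
  intro h
  induction h using List.reverseRecOn with
  | nil =>
    intro _ _
    simpa [picked_nil, mover_zero] using hbase
  | append_singleton h x ih =>
    intro hv hf
    have hv' := valid_of_snoc hv
    have hf' := follows_of_snoc hf
    have hnend := not_ended_of_snoc hv
    have hlen : h.length < H.V.card := by
      have := valid_length_le hv
      simp only [List.length_append, List.length_singleton] at this
      omega
    have IH := ih hv' hf'
    have hlen1 : (h ++ [x]).length = h.length + 1 := by simp
    rw [hlen1, mover_succ, picked_snoc, picked_snoc]
    cases hm : mover s h.length with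
    | R =>
      have hxτ : x = τ h := by
        have := hf h.length (by simp) hm
        rw [List.getD_append_right _ _ _ _ le_rfl, List.take_left] at this
        simpa using this
      obtain ⟨-, hval⟩ := hτ h hv' hf' hnend hlen hm (by rw [hm] at IH; exact IH)
      rw [if_neg (by decide : ¬(Player.R = Player.L)), if_pos rfl]
      simp only [Player.other]
      rw [hxτ]
      exact hval
    | L =>
      have hxfree : x ∈ free H (picked s .L h) (picked s .R h) := by
        rw [free_picked_eq, Finset.mem_sdiff, List.mem_toFinset]
        constructor
        · exact hv.2.1 x (by simp)
        · intro hxh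
          have : ¬ (h ++ [x]).Nodup := by
            simp [List.nodup_append, hxh]
          exact this hv.1
      rw [hm] at IH
      have hnL : ¬ fills H.EL (picked s .L h) := fun hc => hnend (Or.inl hc)
      have hnR : ¬ fills H.ER (picked s .R h) := fun hc => hnend (Or.inr hc)
      have hufd := val_unfold_L hnL hnR ⟨x, hxfree⟩
      rw [hufd] at IH
      have := le_trans (Finset.le_sup' (fun y => val H .R (insert y (picked s .L h))
        (picked s .R h)) hxfree) IH
      rw [if_pos rfl, if_neg (by decide : ¬(Player.L = Player.R))]
      simpa [Player.other] using this

lemma legal_R {τ : Strategy}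
    (hbase : val H s ∅ ∅ ≤ t)
    (hτ : ∀ h, ValidHist H s h → Follows s .R τ h → ¬ ended H s h →
      h.length < H.V.card → mover s h.length = .R →
      val H .R (picked s .L h) (picked s .R h) ≤ t →
      τ h ∈ free H (picked s .L h) (picked s .R h) ∧
      val H .L (picked s .L h) (insert (τ h) (picked s .R h)) ≤ t) :
    Legal H s .R τ := by
  intro h hv hf hnend hlen hm
  have hIH := invariant_R hbase hτ h hv hf
  rw [hm] at hIH
  obtain ⟨hmem, -⟩ := hτ h hv hf hnend hlen hm hIH
  rw [free_picked_eq, Finset.mem_sdiff, List.mem_toFinset] at hmem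
  exact ⟨hmem.1, hmem.2⟩

lemma conclude_R_win {h : List ℕ} (hWF : WellFormed H) (hv : ValidHist H s h)
    (hcomp : Complete H s h)
    (hval : val H (mover s h.length) (picked s .L h) (picked s .R h) = 0) :
    fills H.ER (picked s .R h) := by
  by_contra hnf
  by_cases hL : fills H.EL (picked s .L h)
  · rw [val_of_fillsL _ hL] at hval; omega
  rcases hcomp with hend | hfull
  · rcases hend with h1 | h2
    · exact hL h1
    · exact hnf h2
  · have hfree : free H (picked s .L h) (picked s .R h) = ∅ := by
      rw [free_picked_eq]
      have hsub : h.toFinset ⊆ H.V := fun x hx => hv.2.1 x (List.mem_toFinset.mp hx)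
      have hcard : H.V.card ≤ h.toFinset.card := by
        rw [List.toFinset_card_of_nodup hv.1, hfull]
      rw [Finset.eq_of_subset_of_card_le hsub hcard]
      simp
    rw [val_of_empty _ hL hnf hfree] at hval
    omega

lemma conclude_R_draw {h : List ℕ}
    (hval : val H (mover s h.length) (picked s .L h) (picked s .R h) ≤ 1) :
    ¬ fills H.EL (picked s .L h) := by
  intro hL
  rw [val_of_fillsL _ hL] at hval
  omega

end Workhorse
/-! ### Value strategies -/

noncomputable def leftMove (H : Game) (A B : Finset ℕ) : ℕ :=
  if hf : (free H A B).Nonempty then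
    Classical.choose (Finset.exists_mem_eq_sup' hf (fun x => val H .R (insert x A) B))
  else 0

lemma leftMove_spec {H : Game} {A B : Finset ℕ} (hf : (free H A B).Nonempty) :
    leftMove H A B ∈ free H A B ∧
    (free H A B).sup' hf (fun x => val H .R (insert x A) B)
      = val H .R (insert (leftMove H A B) A) B := by
  rw [leftMove, dif_pos hf]
  exact ⟨(Classical.choose_spec (Finset.exists_mem_eq_sup' hf _)).1,
    (Classical.choose_spec (Finset.exists_mem_eq_sup' hf _)).2⟩

noncomputable def rightMove (H : Game) (A B : Finset ℕ) : ℕ :=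
  if hf : (free H A B).Nonempty then
    Classical.choose (Finset.exists_mem_eq_inf' hf (fun x => val H .L A (insert x B)))
  else 0

lemma rightMove_spec {H : Game} {A B : Finset ℕ} (hf : (free H A B).Nonempty) :
    rightMove H A B ∈ free H A B ∧
    (free H A B).inf' hf (fun x => val H .L A (insert x B))
      = val H .L A (insert (rightMove H A B) B) := by
  rw [rightMove, dif_pos hf]
  exact ⟨(Classical.choose_spec (Finset.exists_mem_eq_inf' hf _)).1,
    (Classical.choose_spec (Finset.exists_mem_eq_inf' hf _)).2⟩

noncomputable def valStratL (H : Game) (s : Player) : Strategy :=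
  fun h => leftMove H (picked s .L h) (picked s .R h)

noncomputable def valStratR (H : Game) (s : Player) : Strategy :=
  fun h => rightMove H (picked s .L h) (picked s .R h)

lemma valStratL_works (H : Game) (s : Player) (t : ℕ) :
    ∀ h, ValidHist H s h → ¬ ended H s h →
      h.length < H.V.card → mover s h.length = .L →
      t ≤ val H .L (picked s .L h) (picked s .R h) →
      valStratL H s h ∈ free H (picked s .L h) (picked s .R h) ∧
      t ≤ val H .R (insert (valStratL H s h) (picked s .L h)) (picked s .R h) := by
  intro h hv hnend hlen hm hval
  have hfne := free_picked_nonempty hv hlen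
  obtain ⟨hmem, heq⟩ := leftMove_spec (A := picked s .L h) (B := picked s .R h) hfne
  refine ⟨hmem, ?_⟩
  have hnL : ¬ fills H.EL (picked s .L h) := fun hc => hnend (Or.inl hc)
  have hnR : ¬ fills H.ER (picked s .R h) := fun hc => hnend (Or.inr hc)
  rw [val_unfold_L hnL hnR hfne, heq] at hval
  exact hval

lemma valStratR_works (H : Game) (s : Player) (t : ℕ) :
    ∀ h, ValidHist H s h → ¬ ended H s h →
      h.length < H.V.card → mover s h.length = .R →
      val H .R (picked s .L h) (picked s .R h) ≤ t →
      valStratR H s h ∈ free H (picked s .L h) (picked s .R h) ∧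
      val H .L (picked s .L h) (insert (valStratR H s h) (picked s .R h)) ≤ t := by
  intro h hv hnend hlen hm hval
  have hfne := free_picked_nonempty hv hlen
  obtain ⟨hmem, heq⟩ := rightMove_spec (A := picked s .L h) (B := picked s .R h) hfne
  refine ⟨hmem, ?_⟩
  have hnL : ¬ fills H.EL (picked s .L h) := fun hc => hnend (Or.inl hc)
  have hnR : ¬ fills H.ER (picked s .R h) := fun hc => hnend (Or.inr hc)
  rw [val_unfold_R hnL hnR hfne, heq] at hval
  exact hval

/-! ### Playing two strategies against each other -/

section Play
variable (H : Game) (s : Player) (σ τ : Strategy)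

open Classical in
noncomputable def playN : ℕ → List ℕ
  | 0 => []
  | n+1 =>
    let h := playN n
    if ¬ ended H s h ∧ h.length < H.V.card then
      h ++ [if mover s h.length = .L then σ h else τ h]
    else h

lemma playN_spec (hσ : Legal H s .L σ) (hτ : Legal H s .R τ) :
    ∀ n, ValidHist H s (playN H s σ τ n) ∧ Follows s .L σ (playN H s σ τ n) ∧
      Follows s .R τ (playN H s σ τ n) ∧
      (¬ Complete H s (playN H s σ τ n) → (playN H s σ τ n).length = n) := by
  intro n
  induction n with
  | zero =>
    have h0 : playN H s σ τ 0 = [] := rfl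
    rw [h0]
    exact ⟨⟨List.nodup_nil, fun x hx => absurd hx List.not_mem_nil,
      fun k hk => absurd hk (by simp)⟩,
      fun k hk _ => absurd hk (by simp), fun k hk _ => absurd hk (by simp), fun _ => rfl⟩
  | succ n ih =>
    obtain ⟨hv, hfσ, hfτ, hlen⟩ := ih
    set h := playN H s σ τ n with hdef
    by_cases hc : ¬ ended H s h ∧ h.length < H.V.card
    · have hstep : playN H s σ τ (n+1)
          = h ++ [if mover s h.length = .L then σ h else τ h] := by
        rw [playN]
        simp only [← hdef]
        rw [if_pos hc]
      set x := if mover s h.length = .L then σ h else τ h with hxdef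
      have hxok : x ∈ H.V ∧ x ∉ h := by
        by_cases hm : mover s h.length = .L
        · rw [hxdef, if_pos hm]
          exact hσ h hv hfσ hc.1 hc.2 hm
        · rw [hxdef, if_neg hm]
          have hmR : mover s h.length = .R := by
            cases hmm : mover s h.length
            · exact absurd hmm hm
            · rfl
          exact hτ h hv hfτ hc.1 hc.2 hmR
      have hvx : ValidHist H s (h ++ [x]) := by
        refine ⟨?_, ?_, ?_⟩
        · simp [List.nodup_append, hv.1, hxok.2]
          intro a ha hax
          exact hxok.2 (hax ▸ ha)
        · intro y hy
          rcases List.mem_append.mp hy with hy' | hy'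
          · exact hv.2.1 y hy'
          · simp at hy'; rw [hy']; exact hxok.1
        · intro k hk
          simp only [List.length_append, List.length_singleton] at hk
          have hkle : k ≤ h.length := by omega
          rw [List.take_append_of_le_length hkle]
          by_cases hkeq : k = h.length
          · rw [hkeq, List.take_length]; exact hc.1
          · exact hv.2.2 k (by omega)
      have hfollow : ∀ (p : Player) (str : Strategy), Follows s p str h →
          ((mover s h.length = p → x = str h) → Follows s p str (h ++ [x])) := by
        intro p str hfp hxp k hk hmk
        simp only [List.length_append, List.length_singleton] at hk
        by_cases hkeq : k = h.length
        · subst hkeq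
          rw [List.getD_append_right _ _ _ _ le_rfl, List.take_left]
          simpa using hxp hmk
        · have hklt : k < h.length := by omega
          rw [List.getD_append _ _ _ _ hklt, List.take_append_of_le_length (le_of_lt hklt)]
          exact hfp k hklt hmk
      rw [hstep]
      refine ⟨hvx, ?_, ?_, ?_⟩
      · apply hfollow .L σ hfσ
        intro hm
        rw [hxdef, if_pos hm]
      · apply hfollow .R τ hfτ
        intro hm
        rw [hxdef, if_neg (by rw [hm]; decide)]
      · intro hncomp
        have hn : h.length = n := by
          apply hlen
          intro hcomp
          rcases hcomp with he | hl
          · exact hc.1 he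
          · omega
        simp [hn]
    · have hstep : playN H s σ τ (n+1) = h := by
        rw [playN]
        simp only [← hdef]
        rw [if_neg hc]
      rw [hstep]
      refine ⟨hv, hfσ, hfτ, fun hncomp => ?_⟩
      exfalso
      push_neg at hc
      by_cases he : ended H s h
      · exact hncomp (Or.inl he)
      · have := hc he
        have := valid_length_le hv
        exact hncomp (Or.inr (by omega))

lemma exists_play (hσ : Legal H s .L σ) (hτ : Legal H s .R τ) :
    ∃ h, ValidHist H s h ∧ Follows s .L σ h ∧ Follows s .R τ h ∧ Complete H s h := by
  obtain ⟨hv, hfσ, hfτ, hlen⟩ := playN_spec H s σ τ hσ hτ (H.V.card)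
  refine ⟨playN H s σ τ H.V.card, hv, hfσ, hfτ, ?_⟩
  by_contra hncomp
  exact hncomp (Or.inr (hlen hncomp))

end Play

/-! ### Adequacy: strategies determine the value -/

section Adequacy
variable {H : Game} {s : Player}

lemma winsL_ge (hWF : WellFormed H) (hw : WinsAs H s .L) : 2 ≤ val H s ∅ ∅ := by
  by_contra hlt
  have ht : val H s ∅ ∅ ≤ 1 := by omega
  obtain ⟨σw, hσl, hσwin⟩ := hw
  have hτ := valStratR_works H s 1
  have hτl : Legal H s .R (valStratR H s) := legal_R ht (fun h hv _ => hτ h hv)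
  obtain ⟨h, hv, hfσ, hfτ, hcomp⟩ := exists_play H s σw (valStratR H s) hσl hτl
  have hinv := invariant_R ht (fun h hv _ => hτ h hv) h hv hfτ
  exact (conclude_R_draw hinv) (hσwin h hv hfσ hcomp)

lemma winsR_le (hWF : WellFormed H) (hw : WinsAs H s .R) : val H s ∅ ∅ = 0 := by
  by_contra hne
  have ht : 1 ≤ val H s ∅ ∅ := by omega
  obtain ⟨τw, hτl, hτwin⟩ := hw
  have hσ := valStratL_works H s 1
  have hσl : Legal H s .L (valStratL H s) := legal_L ht (fun h hv _ => hσ h hv)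
  obtain ⟨h, hv, hfσ, hfτ, hcomp⟩ := exists_play H s (valStratL H s) τw hσl hτl
  have hinv := invariant_L ht (fun h hv _ => hσ h hv) h hv hfσ
  exact (conclude_L_draw hWF hv hcomp hinv) (hτwin h hv hfτ hcomp)

lemma nonloseL_ge (hWF : WellFormed H) (hn : NonLosingAs H s .L) : 1 ≤ val H s ∅ ∅ := by
  by_contra hlt
  have ht : val H s ∅ ∅ ≤ 0 := by omega
  obtain ⟨σn, hσl, hσnl⟩ := hn
  have hτ := valStratR_works H s 0
  have hτl : Legal H s .R (valStratR H s) := legal_R ht (fun h hv _ => hτ h hv)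
  obtain ⟨h, hv, hfσ, hfτ, hcomp⟩ := exists_play H s σn (valStratR H s) hσl hτl
  have hinv := invariant_R ht (fun h hv _ => hτ h hv) h hv hfτ
  have hfill := conclude_R_win hWF hv hcomp (by omega)
  exact (hσnl h hv hfσ hcomp) hfill

lemma nonloseR_le (hWF : WellFormed H) (hn : NonLosingAs H s .R) : val H s ∅ ∅ ≤ 1 := by
  by_contra hlt
  have ht : 2 ≤ val H s ∅ ∅ := by omega
  obtain ⟨τn, hτl, hτnl⟩ := hn
  have hσ := valStratL_works H s 2
  have hσl : Legal H s .L (valStratL H s) := legal_L ht (fun h hv _ => hσ h hv)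
  obtain ⟨h, hv, hfσ, hfτ, hcomp⟩ := exists_play H s (valStratL H s) τn hσl hτl
  have hinv := invariant_L ht (fun h hv _ => hσ h hv) h hv hfσ
  have hfill := conclude_L_win hWF hv hcomp hinv
  exact (hτnl h hv hfτ hcomp) hfill

lemma resultIs_val (hWF : WellFormed H) {r : Result} (hr : resultIs H s r) :
    r.val = val H s ∅ ∅ := by
  cases r with
  | Lwin => exact le_antisymm (winsL_ge hWF hr) (val_le_two _ _ _ _)
  | Rwin => exact (winsR_le hWF hr).symm
  | draw => exact le_antisymm (nonloseL_ge hWF hr.1) (nonloseR_le hWF hr.2)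

end Adequacy
/-! ### The greedy strategy and the final theorem -/

noncomputable def greedyStrat (G : Game) (v : ℕ) : Strategy :=
  fun h => if h = [] then v else valStratL G .L h

lemma greedyStrat_works {G : Game} {u v : ℕ} (hWF : WellFormed G)
    (hno1 : ∀ e ∈ G.EL ∪ G.ER, e.card ≠ 1)
    (he : ({u, v} : Finset ℕ) ∈ G.EL) (huv : u ≠ v) (hu : u ∈ G.V) (hv : v ∈ G.V)
    (hdomL : ∀ e ∈ G.EL, u ∈ e → v ∈ e) (hdomR : ∀ e ∈ G.ER, u ∈ e → v ∈ e) (t : ℕ) :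
    ∀ h, ValidHist G .L h → Follows .L .L (greedyStrat G v) h → ¬ ended G .L h →
      h.length < G.V.card → mover .L h.length = .L →
      t ≤ val G .L (picked .L .L h) (picked .L .R h) →
      greedyStrat G v h ∈ free G (picked .L .L h) (picked .L .R h) ∧
      t ≤ val G .R (insert (greedyStrat G v h) (picked .L .L h)) (picked .L .R h) := by
  intro h hvh hf hnend hlen hm hval
  by_cases hnil : h = []
  · subst hnil
    rw [greedyStrat, if_pos rfl]
    rw [picked_nil, picked_nil] at *
    constructor
    · rw [free, Finset.mem_sdiff]
      exact ⟨hv, by simp⟩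
    · calc t ≤ val G .L ∅ ∅ := hval
        _ ≤ val G .R (insert v ∅) ∅ :=
          greedy_first hWF hno1 he huv hu hv hdomL hdomR
  · rw [greedyStrat, if_neg hnil]
    exact valStratL_works G .L t h hvh hnend hlen hm hval

theorem greedy_move' (G : Game) (hG : WellFormed G) (u v : ℕ)
    (hu : u ∈ G.V) (hv : v ∈ G.V)
    (hno1 : ∀ e ∈ G.EL ∪ G.ER, e.card ≠ 1)
    (he : ({u, v} : Finset ℕ) ∈ G.EL)
    (hdom : ∀ e ∈ G.EL ∪ G.ER, u ∈ e → v ∈ e) :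
    (WinsAs G .L .L →
      ∃ σ : Strategy, σ [] = v ∧ Legal G .L .L σ ∧
        ∀ h, ValidHist G .L h → Follows .L .L σ h → Complete G .L h →
          fills (G.edges .L) (picked .L .L h)) ∧
    (NonLosingAs G .L .L →
      ∃ σ : Strategy, σ [] = v ∧ Legal G .L .L σ ∧
        ∀ h, ValidHist G .L h → Follows .L .L σ h → Complete G .L h →
          ¬ fills (G.edges .R) (picked .L .R h)) ∧
    (∀ o o' : Outcome, hasOutcome G o → hasOutcome (updLR G v u) o' → outLE o o') := by
  have huv : u ≠ v := by
    intro huv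
    apply hno1 {u, v} (Finset.mem_union_left _ he)
    rw [huv]
    simp
  have hdomL : ∀ e ∈ G.EL, u ∈ e → v ∈ e :=
    fun e he' => hdom e (Finset.mem_union_left _ he')
  have hdomR : ∀ e ∈ G.ER, u ∈ e → v ∈ e :=
    fun e he' => hdom e (Finset.mem_union_right _ he')
  have hgw := greedyStrat_works hG hno1 he huv hu hv hdomL hdomR
  refine ⟨?_, ?_, ?_⟩
  · -- winning
    intro hw
    have hval2 : 2 ≤ val G .L ∅ ∅ := winsL_ge hG hw
    refine ⟨greedyStrat G v, by rw [greedyStrat, if_pos rfl], legal_L hval2 (hgw 2), ?_⟩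
    intro h hvh hf hcomp
    have hinv := invariant_L hval2 (hgw 2) h hvh hf
    exact conclude_L_win hG hvh hcomp hinv
  · -- non-losing
    intro hn
    have hval1 : 1 ≤ val G .L ∅ ∅ := nonloseL_ge hG hn
    refine ⟨greedyStrat G v, by rw [greedyStrat, if_pos rfl], legal_L hval1 (hgw 1), ?_⟩
    intro h hvh hf hcomp
    have hinv := invariant_L hval1 (hgw 1) h hvh hf
    exact conclude_L_draw hG hvh hcomp hinv
  · -- outcome comparison
    intro o o' ho ho'
    have hWF' : WellFormed (updLR G v u) := wf_updLR hG hno1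
    have hkey : ∀ s : Player, val G s ∅ ∅ ≤ val (updLR G v u) s ∅ ∅ := by
      intro s
      have h1 := main_le huv hu hv hdomL hdomR
        (G.V \ ((∅:Finset ℕ) ∪ (∅:Finset ℕ) ∪ {u, v})).card s ∅ ∅
        (by simp) (by simp) (by simp) (by simp) le_rfl
      have h2 := updLR_val huv hdomL hdomR
        (G.V \ ((∅:Finset ℕ) ∪ (∅:Finset ℕ) ∪ {u, v})).card s ∅ ∅
        (by simp) (by simp) (by simp) (by simp) le_rfl
      rw [h2]
      exact h1
    constructor
    · rw [resultIs_val hG ho.1, resultIs_val hWF' ho'.1]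
      exact hkey .L
    · rw [resultIs_val hG ho.2, resultIs_val hWF' ho'.2]
      exact hkey .R


/-- Greedy move: if there are no edges of size 1 and there is a blue edge `{u, v}` such
that every edge containing `u` also contains `v`, then picking `v` is an optimal first
move for Left, and `o(G) ≤_L o(G_v^u)`. -/
theorem greedy_move (G : Game) (hG : WellFormed G) (u v : ℕ)
    (hu : u ∈ G.V) (hv : v ∈ G.V)
    (hno1 : ∀ e ∈ G.EL ∪ G.ER, e.card ≠ 1)
    (he : ({u, v} : Finset ℕ) ∈ G.EL)
    (hdom : ∀ e ∈ G.EL ∪ G.ER, u ∈ e → v ∈ e) :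
    (WinsAs G .L .L →
      ∃ σ : Strategy, σ [] = v ∧ Legal G .L .L σ ∧
        ∀ h, ValidHist G .L h → Follows .L .L σ h → Complete G .L h →
          fills (G.edges .L) (picked .L .L h)) ∧
    (NonLosingAs G .L .L →
      ∃ σ : Strategy, σ [] = v ∧ Legal G .L .L σ ∧
        ∀ h, ValidHist G .L h → Follows .L .L σ h → Complete G .L h →
          ¬ fills (G.edges .R) (picked .L .R h)) ∧
    (∀ o o' : Outcome, hasOutcome G o → hasOutcome (updLR G v u) o' → outLE o o') :=
  greedy_move' G hG u v hu hv hno1 he hdom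

end APG
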